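/- Assume ρ is a unital measuring (conditions (1)–(4)) and σ:H×H→A is a k-bilinear H^R-balanced map. If a k-bilinear H^L-balanced map σ̄:H×H→A satisfies conditions (14), (15) and (16), then the map σ̃:H×H→A defined by σ̃(h,k) := (h⁽¹⁾k⁽¹⁾·1_A)σ̄(h⁽²⁾,k⁽²⁾) satisfies all four conditions (13)–(16). -/

import Mathlib

open scoped TensorProduct

/-- The data of a weak bialgebra structure (together with an antipode and its
inverse) on a `k`-algebra `H`: a comultiplication `Δ`, a counit `ε`, an
antipode `S` and its inverse `Sinv`. -/
structure WeakHopfData (k H : Type*) [Field k] [Ring H] [Algebra k H] where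
  Δ : H →ₗ[k] H ⊗[k] H
  ε : H →ₗ[k] k
  S : H →ₗ[k] H
  Sinv : H →ₗ[k] H

section

variable {k H A : Type*} [Field k] [Ring H] [Algebra k H] [Ring A] [Algebra k A]

/-- `Π^L(h) = ε(1⁽¹⁾h)1⁽²⁾`. -/
noncomputable def piL (W : WeakHopfData k H) (h : H) : H :=
  (TensorProduct.lid k H) ((LinearMap.rTensor H (W.ε ∘ₗ LinearMap.mulRight k h)) (W.Δ 1))

/-- `Π^R(h) = 1⁽¹⁾ε(h1⁽²⁾)`. -/
noncomputable def piR (W : WeakHopfData k H) (h : H) : H :=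
  (TensorProduct.rid k H) ((LinearMap.lTensor H (W.ε ∘ₗ LinearMap.mulLeft k h)) (W.Δ 1))

/-- `H^L = im(Π^L)`. -/
def HL (W : WeakHopfData k H) : Set H := Set.range (piL W)

/-- `H^R = im(Π^R)`. -/
def HR (W : WeakHopfData k H) : Set H := Set.range (piR W)

/-- The axioms of a weak Hopf algebra with bijective antipode, where Sweedler
sums are expressed via arbitrary finite representations of the comultiplication. -/
structure IsWeakHopf (W : WeakHopfData k H) : Prop where
  coassoc : ∀ h : H,
    (TensorProduct.assoc k H H H) ((LinearMap.rTensor H W.Δ) (W.Δ h)) =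
      (LinearMap.lTensor H W.Δ) (W.Δ h)
  counit_left : ∀ h : H, (TensorProduct.lid k H) ((LinearMap.rTensor H W.ε) (W.Δ h)) = h
  counit_right : ∀ h : H, (TensorProduct.rid k H) ((LinearMap.lTensor H W.ε) (W.Δ h)) = h
  comul_mul : ∀ h l : H, W.Δ (h * l) = W.Δ h * W.Δ l
  weak_comul_one₁ : (LinearMap.lTensor H W.Δ) (W.Δ 1) =
    (TensorProduct.assoc k H H H) (W.Δ 1 ⊗ₜ[k] (1 : H)) * ((1 : H) ⊗ₜ[k] W.Δ 1)
  weak_comul_one₂ : (LinearMap.lTensor H W.Δ) (W.Δ 1) =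
    ((1 : H) ⊗ₜ[k] W.Δ 1) * (TensorProduct.assoc k H H H) (W.Δ 1 ⊗ₜ[k] (1 : H))
  weak_counit : ∀ h l m : H, ∀ (n : ℕ) (x y : Fin n → H),
    W.Δ l = ∑ i, x i ⊗ₜ[k] y i →
      W.ε (h * l * m) = ∑ i, W.ε (h * x i) * W.ε (y i * m) ∧
      W.ε (h * l * m) = ∑ i, W.ε (h * y i) * W.ε (x i * m)
  antipode_left : ∀ h : H, ∀ (n : ℕ) (x y : Fin n → H),
    W.Δ h = ∑ i, x i ⊗ₜ[k] y i → ∑ i, x i * W.S (y i) = piL W h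
  antipode_right : ∀ h : H, ∀ (n : ℕ) (x y : Fin n → H),
    W.Δ h = ∑ i, x i ⊗ₜ[k] y i → ∑ i, W.S (x i) * y i = piR W h
  antipode_mid : ∀ h : H, ∀ (n : ℕ) (x y : Fin n → H),
    W.Δ h = ∑ i, x i ⊗ₜ[k] y i →
      ∀ (m : Fin n → ℕ) (u v : (i : Fin n) → Fin (m i) → H),
        (∀ i, W.Δ (y i) = ∑ j, u i j ⊗ₜ[k] v i j) →
          ∑ i, ∑ j, W.S (x i) * u i j * W.S (v i j) = W.S h
  S_Sinv : ∀ h : H, W.S (W.Sinv h) = h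
  Sinv_S : ∀ h : H, W.Sinv (W.S h) = h

/-- Condition (1): `h·1_A = Π^L(h)·1_A`. -/
def cond1 (W : WeakHopfData k H) (ρ : H →ₗ[k] A →ₗ[k] A) : Prop :=
  ∀ h : H, ρ h 1 = ρ (piL W h) 1

/-- Condition (2): `h·(aa') = (h⁽¹⁾·a)(h⁽²⁾·a')`. -/
def cond2 (W : WeakHopfData k H) (ρ : H →ₗ[k] A →ₗ[k] A) : Prop :=
  ∀ (h : H) (a a' : A) (n : ℕ) (x y : Fin n → H),
    W.Δ h = ∑ i, x i ⊗ₜ[k] y i → ρ h (a * a') = ∑ i, ρ (x i) a * ρ (y i) a'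

/-- Condition (3): `S⁻¹(l)h·a = (h·a)(l·1_A)` and `lh·a = (l·1_A)(h·a)` for `l ∈ H^L`. -/
def cond3 (W : WeakHopfData k H) (ρ : H →ₗ[k] A →ₗ[k] A) : Prop :=
  ∀ (h : H) (a : A), ∀ l ∈ HL W,
    ρ (W.Sinv l * h) a = ρ h a * ρ l 1 ∧ ρ (l * h) a = ρ l 1 * ρ h a

/-- Condition (4): `1·a = a`. -/
def cond4 (ρ : H →ₗ[k] A →ₗ[k] A) : Prop := ∀ a : A, ρ 1 a = a

/-- Condition (5). -/
def cond5 (W : WeakHopfData k H) (ρ : H →ₗ[k] A →ₗ[k] A) (σ : H → H → A) : Prop :=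
  ∀ (h g : H), ∀ l ∈ HL W,
    σ (l * h) g = ρ l 1 * σ h g ∧ σ (W.Sinv l * h) g = σ h g * ρ l 1

/-- Condition (6): `(h⁽¹⁾·(l·1_A))σ(h⁽²⁾,k) = σ(h,lk)` for `l ∈ H^L`. -/
def cond6 (W : WeakHopfData k H) (ρ : H →ₗ[k] A →ₗ[k] A) (σ : H → H → A) : Prop :=
  ∀ (h g : H), ∀ l ∈ HL W, ∀ (n : ℕ) (x y : Fin n → H),
    W.Δ h = ∑ i, x i ⊗ₜ[k] y i →
      ∑ i, ρ (x i) (ρ l 1) * σ (y i) g = σ h (l * g)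

/-- Condition (7): `σ(1,h) = σ(h,1) = h·1_A`. -/
def cond7 (ρ : H →ₗ[k] A →ₗ[k] A) (σ : H → H → A) : Prop :=
  ∀ h : H, σ 1 h = ρ h 1 ∧ σ h 1 = ρ h 1

/-- Condition (8), the cocycle condition. -/
def cond8 (W : WeakHopfData k H) (ρ : H →ₗ[k] A →ₗ[k] A) (σ : H → H → A) : Prop :=
  ∀ (h g m : H) (n₁ : ℕ) (x₁ y₁ : Fin n₁ → H) (n₂ : ℕ) (x₂ y₂ : Fin n₂ → H)
    (n₃ : ℕ) (x₃ y₃ : Fin n₃ → H),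
    W.Δ h = ∑ i, x₁ i ⊗ₜ[k] y₁ i → W.Δ g = ∑ i, x₂ i ⊗ₜ[k] y₂ i →
    W.Δ m = ∑ i, x₃ i ⊗ₜ[k] y₃ i →
      ∑ i, ∑ j, ∑ p, ρ (x₁ i) (σ (x₂ j) (x₃ p)) * σ (y₁ i) (y₂ j * y₃ p) =
        ∑ i, ∑ j, σ (x₁ i) (x₂ j) * σ (y₁ i * y₂ j) m

/-- Condition (9), the twisted module condition. -/
def cond9 (W : WeakHopfData k H) (ρ : H →ₗ[k] A →ₗ[k] A) (σ : H → H → A) : Prop :=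
  ∀ (h g : H) (a : A) (n : ℕ) (x y : Fin n → H) (m : ℕ) (u v : Fin m → H),
    W.Δ h = ∑ i, x i ⊗ₜ[k] y i → W.Δ g = ∑ j, u j ⊗ₜ[k] v j →
      ∑ i, ∑ j, ρ (x i) (ρ (u j) a) * σ (y i) (v j) =
        ∑ i, ∑ j, σ (x i) (u j) * ρ (y i * v j) a

/-- Condition (10): `h·(l·1_A) = hl·1_A` for `l ∈ H^L`. -/
def cond10 (W : WeakHopfData k H) (ρ : H →ₗ[k] A →ₗ[k] A) : Prop :=
  ∀ h : H, ∀ l ∈ HL W, ρ h (ρ l 1) = ρ (h * l) 1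

/-- Condition (11): `h·(l·1_A) = hl·1_A` for all `h, l ∈ H`. -/
def cond11 (ρ : H →ₗ[k] A →ₗ[k] A) : Prop :=
  ∀ h l : H, ρ h (ρ l 1) = ρ (h * l) 1

/-- Condition (12): `σ(h,l) = σ(hl,1)` for `l ∈ H^L`. -/
def cond12 (W : WeakHopfData k H) (σ : H → H → A) : Prop :=
  ∀ h : H, ∀ l ∈ HL W, σ h l = σ (h * l) 1

/-- Condition (13). -/
def cond13 (W : WeakHopfData k H) (ρ : H →ₗ[k] A →ₗ[k] A) (σbar : H → H → A) : Prop :=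
  ∀ (h g : H) (n : ℕ) (x y : Fin n → H) (m : ℕ) (u v : Fin m → H),
    W.Δ h = ∑ i, x i ⊗ₜ[k] y i → W.Δ g = ∑ j, u j ⊗ₜ[k] v j →
      σbar h g = ∑ i, ∑ j, ρ (x i * u j) 1 * σbar (y i) (v j)

/-- Condition (14). -/
def cond14 (W : WeakHopfData k H) (ρ : H →ₗ[k] A →ₗ[k] A) (σbar : H → H → A) : Prop :=
  ∀ (h g : H), ∀ l ∈ HL W,
    σbar (l * h) g = ρ l 1 * σbar h g ∧ σbar (W.Sinv l * h) g = σbar h g * ρ l 1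

/-- Condition (15). -/
def cond15 (W : WeakHopfData k H) (ρ : H →ₗ[k] A →ₗ[k] A) (σbar : H → H → A) : Prop :=
  ∀ (h g : H), ∀ l ∈ HL W, ∀ (n : ℕ) (x y : Fin n → H),
    W.Δ h = ∑ i, x i ⊗ₜ[k] y i →
      ∑ i, σbar (x i) g * ρ (y i) (ρ l 1) = σbar h (W.Sinv l * g)

/-- Condition (16). -/
def cond16 (W : WeakHopfData k H) (ρ : H →ₗ[k] A →ₗ[k] A) (σ σbar : H → H → A) : Prop :=
  ∀ (h g : H) (n : ℕ) (x y : Fin n → H) (m : ℕ) (u v : Fin m → H),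
    W.Δ h = ∑ i, x i ⊗ₜ[k] y i → W.Δ g = ∑ j, u j ⊗ₜ[k] v j →
      (∑ i, ∑ j, σ (x i) (u j) * σbar (y i) (v j) = ρ h (ρ g 1)) ∧
      (∑ i, ∑ j, σbar (x i) (u j) * σ (y i) (v j) = ρ (h * g) 1)

/-- Condition (17), the cocycle condition for `ς : H ⊗ H → A`. -/
def cond17 (W : WeakHopfData k H) (ρ : H →ₗ[k] A →ₗ[k] A) (ς : H ⊗[k] H → A) : Prop :=
  ∀ (h g m : H) (n₁ : ℕ) (x₁ y₁ : Fin n₁ → H) (n₂ : ℕ) (x₂ y₂ : Fin n₂ → H)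
    (n₃ : ℕ) (x₃ y₃ : Fin n₃ → H),
    W.Δ h = ∑ i, x₁ i ⊗ₜ[k] y₁ i → W.Δ g = ∑ i, x₂ i ⊗ₜ[k] y₂ i →
    W.Δ m = ∑ i, x₃ i ⊗ₜ[k] y₃ i →
      ∑ i, ∑ j, ∑ p, ρ (x₁ i) (ς (x₂ j ⊗ₜ[k] x₃ p)) * ς (y₁ i ⊗ₜ[k] (y₂ j * y₃ p)) =
        ∑ i, ∑ j, ς (x₁ i ⊗ₜ[k] x₂ j) * ς ((y₁ i * y₂ j) ⊗ₜ[k] m)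

/-- Condition (18), the twisted module condition for `ς : H ⊗ H → A`. -/
def cond18 (W : WeakHopfData k H) (ρ : H →ₗ[k] A →ₗ[k] A) (ς : H ⊗[k] H → A) : Prop :=
  ∀ (h g : H) (a : A) (n : ℕ) (x y : Fin n → H) (m : ℕ) (u v : Fin m → H),
    W.Δ h = ∑ i, x i ⊗ₜ[k] y i → W.Δ g = ∑ j, u j ⊗ₜ[k] v j →
      ∑ i, ∑ j, ρ (x i) (ρ (u j) a) * ς (y i ⊗ₜ[k] v j) =
        ∑ i, ∑ j, ς (x i ⊗ₜ[k] u j) * ρ (y i * v j) a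

/-- Condition (19). -/
def cond19 (W : WeakHopfData k H) (ρ : H →ₗ[k] A →ₗ[k] A) (ς : H ⊗[k] H → A) : Prop :=
  ∀ (h g : H) (n : ℕ) (x y : Fin n → H) (m : ℕ) (u v : Fin m → H),
    W.Δ h = ∑ i, x i ⊗ₜ[k] y i → W.Δ g = ∑ j, u j ⊗ₜ[k] v j →
      ς (h ⊗ₜ[k] g) = ∑ i, ∑ j, ς (x i ⊗ₜ[k] u j) * ρ (y i * v j) 1

/-- Condition (20). -/
def cond20 (W : WeakHopfData k H) (ρ : H →ₗ[k] A →ₗ[k] A) (ς : H ⊗[k] H → A) : Prop :=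
  ∀ (h : H) (n : ℕ) (x y : Fin n → H) (m : ℕ) (u v : Fin m → H),
    W.Δ h = ∑ i, x i ⊗ₜ[k] y i → W.Δ 1 = ∑ j, u j ⊗ₜ[k] v j →
      ρ h 1 = ∑ i, ∑ j, ρ (x i) (ρ (u j) 1) * ς (y i ⊗ₜ[k] v j)

/-- Condition (21). -/
def cond21 (W : WeakHopfData k H) (ρ : H →ₗ[k] A →ₗ[k] A) (ς : H ⊗[k] H → A) : Prop :=
  ∀ (h : H) (m : ℕ) (u v : Fin m → H),
    W.Δ 1 = ∑ j, u j ⊗ₜ[k] v j →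
      ρ h 1 = ∑ j, ρ (u j) 1 * ς (v j ⊗ₜ[k] h)

/-- Condition (22): `a(1⁽¹⁾·1_A) ⊗ 1⁽²⁾ = (1⁽¹⁾·a) ⊗ 1⁽²⁾` in `A ⊗ H`. -/
def cond22 (W : WeakHopfData k H) (ρ : H →ₗ[k] A →ₗ[k] A) : Prop :=
  ∀ (a : A) (m : ℕ) (u v : Fin m → H),
    W.Δ 1 = ∑ j, u j ⊗ₜ[k] v j →
      (∑ j, (a * ρ (u j) 1) ⊗ₜ[k] v j) = ∑ j, (ρ (u j) a) ⊗ₜ[k] v j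

/-- Condition (23). -/
def cond23 (W : WeakHopfData k H) (ρ : H →ₗ[k] A →ₗ[k] A) (ςbar : H ⊗[k] H → A) : Prop :=
  ∀ (h g : H) (n : ℕ) (x y : Fin n → H) (m : ℕ) (u v : Fin m → H),
    W.Δ h = ∑ i, x i ⊗ₜ[k] y i → W.Δ g = ∑ j, u j ⊗ₜ[k] v j →
      ςbar (h ⊗ₜ[k] g) = ∑ i, ∑ j, ρ (x i * u j) 1 * ςbar (y i ⊗ₜ[k] v j)

/-- Condition (24). -/
def cond24 (W : WeakHopfData k H) (ρ : H →ₗ[k] A →ₗ[k] A) (ς ςbar : H ⊗[k] H → A) : Prop :=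
  ∀ (h g : H) (n : ℕ) (x y : Fin n → H) (m : ℕ) (u v : Fin m → H),
    W.Δ h = ∑ i, x i ⊗ₜ[k] y i → W.Δ g = ∑ j, u j ⊗ₜ[k] v j →
      (∑ i, ∑ j, ς (x i ⊗ₜ[k] u j) * ςbar (y i ⊗ₜ[k] v j) = ρ (h * g) 1) ∧
      (∑ i, ∑ j, ςbar (x i ⊗ₜ[k] u j) * ς (y i ⊗ₜ[k] v j) = ρ (h * g) 1)

/-- `σ` is `H^R`-balanced: `σ(hr,k) = σ(h,rk)` for `r ∈ H^R`. -/
def HRBalanced (W : WeakHopfData k H) (σ : H → H → A) : Prop :=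
  ∀ (h g : H), ∀ r ∈ HR W, σ (h * r) g = σ h (r * g)

/-- `σbar` is `H^L`-balanced: `σbar(hl,k) = σbar(h,lk)` for `l ∈ H^L`. -/
def HLBalanced (W : WeakHopfData k H) (σbar : H → H → A) : Prop :=
  ∀ (h g : H), ∀ l ∈ HL W, σbar (h * l) g = σbar h (l * g)

/-- The idempotent `∇ρ : A ⊗ H → A ⊗ H`, `a ⊗ h ↦ a(h⁽¹⁾·1_A) ⊗ h⁽²⁾`. -/
noncomputable def nabla (W : WeakHopfData k H) (ρ : H →ₗ[k] A →ₗ[k] A) :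
    A ⊗[k] H →ₗ[k] A ⊗[k] H :=
  (LinearMap.rTensor H (LinearMap.mul' k A ∘ₗ LinearMap.lTensor A (ρ.flip 1))) ∘ₗ
    (TensorProduct.assoc k A H H).symm.toLinearMap ∘ₗ LinearMap.lTensor A W.Δ

/-- The subspace `N` of `A ⊗ H` spanned by the elements
`a(l·1_A) ⊗ h - a ⊗ lh` with `l ∈ H^L`, so that `(A ⊗ H)/N = A ⊗_{H^L} H`. -/
def relN (W : WeakHopfData k H) (ρ : H →ₗ[k] A →ₗ[k] A) : Submodule k (A ⊗[k] H) :=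
  Submodule.span k
    {z | ∃ (a : A) (l h : H), l ∈ HL W ∧ z = (a * ρ l 1) ⊗ₜ[k] h - a ⊗ₜ[k] (l * h)}

/-- The map `σ̃(h,k) := (h⁽¹⁾k⁽¹⁾·1_A)σ̄(h⁽²⁾,k⁽²⁾)`. -/
noncomputable def sigmaTilde (W : WeakHopfData k H) (ρ : H →ₗ[k] A →ₗ[k] A)
    (σbar : H →ₗ[k] H →ₗ[k] A) : H → H → A := fun h g =>
  LinearMap.mul' k A
    ((TensorProduct.map ((ρ.flip 1) ∘ₗ LinearMap.mul' k H) (TensorProduct.lift σbar))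
      ((TensorProduct.tensorTensorTensorComm k H H H H) (W.Δ h ⊗ₜ[k] W.Δ g)))

end


set_option linter.unusedVariables false

section infra
variable {k H M : Type*} [Field k] [Ring H] [Algebra k H] [AddCommMonoid M] [Module k M]

open TensorProduct LinearMap

theorem exists_rep (t : H ⊗[k] H) : ∃ (n : ℕ) (x y : Fin n → H), t = ∑ i, x i ⊗ₜ[k] y i := by
  induction t with
  | zero => exact ⟨0, ![], ![], by simp⟩
  | tmul a b => exact ⟨1, ![a], ![b], by simp⟩
  | add s t hs ht =>
    obtain ⟨n, x, y, rfl⟩ := hs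
    obtain ⟨m, u, v, rfl⟩ := ht
    refine ⟨n + m, Fin.append x u, Fin.append y v, ?_⟩
    rw [Fin.sum_univ_add]
    simp [Fin.append]

def mk₃ (f : H → H → H → M)
    (h1 : ∀ a a' b c, f (a + a') b c = f a b c + f a' b c)
    (h2 : ∀ (r : k) a b c, f (r • a) b c = r • f a b c)
    (h3 : ∀ a b b' c, f a (b + b') c = f a b c + f a b' c)
    (h4 : ∀ (r : k) a b c, f a (r • b) c = r • f a b c)
    (h5 : ∀ a b c c', f a b (c + c') = f a b c + f a b c')
    (h6 : ∀ (r : k) a b c, f a b (r • c) = r • f a b c) :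
    H →ₗ[k] H →ₗ[k] H →ₗ[k] M where
  toFun a := LinearMap.mk₂ k (f a) (h3 a) (fun r => h4 r a) (h5 a) (fun r => h6 r a)
  map_add' a a' := LinearMap.ext fun b => LinearMap.ext fun c => by
    simp only [LinearMap.mk₂_apply, LinearMap.add_apply, h1]
  map_smul' r a := LinearMap.ext fun b => LinearMap.ext fun c => by
    simp only [LinearMap.mk₂_apply, LinearMap.smul_apply, RingHom.id_apply, h2]

@[simp] lemma mk₃_apply (f : H → H → H → M)
    (h1 : ∀ a a' b c, f (a + a') b c = f a b c + f a' b c)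
    (h2 : ∀ (r : k) a b c, f (r • a) b c = r • f a b c)
    (h3 : ∀ a b b' c, f a (b + b') c = f a b c + f a b' c)
    (h4 : ∀ (r : k) a b c, f a (r • b) c = r • f a b c)
    (h5 : ∀ a b c c', f a b (c + c') = f a b c + f a b c')
    (h6 : ∀ (r : k) a b c, f a b (r • c) = r • f a b c) (a b c : H) :
    mk₃ f h1 h2 h3 h4 h5 h6 a b c = f a b c := rfl

noncomputable def lift₃ (φ : H →ₗ[k] H →ₗ[k] H →ₗ[k] M) : H ⊗[k] (H ⊗[k] H) →ₗ[k] M :=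
  TensorProduct.lift ((TensorProduct.uncurry (RingHom.id k) H H M).comp φ)

@[simp] lemma lift₃_tmul (φ : H →ₗ[k] H →ₗ[k] H →ₗ[k] M) (a b c : H) :
    lift₃ φ (a ⊗ₜ[k] (b ⊗ₜ[k] c)) = φ a b c := by
  simp [lift₃]

end infra

section whopf
open TensorProduct LinearMap Finset

variable {k H M : Type*} [Field k] [Ring H] [Algebra k H] [AddCommMonoid M] [Module k M]
variable (W : WeakHopfData k H)

/-- pair index helpers -/
def pFst {n m : ℕ} (t : Fin (n * m)) : Fin n := (finProdFinEquiv.symm t).1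
def pSnd {n m : ℕ} (t : Fin (n * m)) : Fin m := (finProdFinEquiv.symm t).2

lemma sumPair {n m : ℕ} (f : Fin n → Fin m → M) :
    (∑ t : Fin (n * m), f (pFst t) (pSnd t)) = ∑ i, ∑ j, f i j := by
  exact (Equiv.sum_comp finProdFinEquiv.symm (fun p : Fin n × Fin m => f p.1 p.2)).trans
    (Fintype.sum_prod_type (f := fun p : Fin n × Fin m => f p.1 p.2))

/-- apply a bilinear map to an equality of tensors given by sums -/
lemma lift_sum_eq (Φ : H →ₗ[k] H →ₗ[k] M) {n : ℕ} {x y : Fin n → H} {m : ℕ}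
    {u v : Fin m → H} (hxy : ∑ i, x i ⊗ₜ[k] y i = ∑ j, u j ⊗ₜ[k] v j) :
    ∑ i, Φ (x i) (y i) = ∑ j, Φ (u j) (v j) := by
  have := congrArg (TensorProduct.lift Φ) hxy
  simpa only [map_sum, TensorProduct.lift.tmul] using this

lemma piL_apply {n : ℕ} {p q : Fin n → H} (h1 : W.Δ 1 = ∑ t, p t ⊗ₜ[k] q t) (h : H) :
    piL W h = ∑ t, W.ε (p t * h) • q t := by
  rw [piL, h1, map_sum, map_sum]
  simp only [rTensor_tmul, lid_tmul, coe_comp, Function.comp_apply, mulRight_apply]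

lemma piR_apply {n : ℕ} {p q : Fin n → H} (h1 : W.Δ 1 = ∑ t, p t ⊗ₜ[k] q t) (h : H) :
    piR W h = ∑ t, W.ε (h * q t) • p t := by
  rw [piR, h1, map_sum, map_sum]
  simp only [lTensor_tmul, rid_tmul, coe_comp, Function.comp_apply, mulLeft_apply]


lemma sum_counit_left (hW : IsWeakHopf W) {h : H} {n : ℕ} {x y : Fin n → H}
    (hh : W.Δ h = ∑ i, x i ⊗ₜ[k] y i) : ∑ i, W.ε (x i) • y i = h := by
  have := hW.counit_left h
  rw [hh, map_sum, map_sum] at this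
  simpa only [rTensor_tmul, lid_tmul] using this

lemma sum_counit_right (hW : IsWeakHopf W) {h : H} {n : ℕ} {x y : Fin n → H}
    (hh : W.Δ h = ∑ i, x i ⊗ₜ[k] y i) : ∑ i, W.ε (y i) • x i = h := by
  have := hW.counit_right h
  rw [hh, map_sum, map_sum] at this
  simpa only [lTensor_tmul, rid_tmul] using this

lemma piL_one (hW : IsWeakHopf W) : piL W 1 = 1 := by
  obtain ⟨n, p, q, h1⟩ := exists_rep (W.Δ 1)
  rw [piL_apply W h1]
  simpa only [mul_one] using sum_counit_left W hW h1

lemma piR_one (hW : IsWeakHopf W) : piR W 1 = 1 := by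
  obtain ⟨n, p, q, h1⟩ := exists_rep (W.Δ 1)
  rw [piR_apply W h1]
  simpa only [one_mul] using sum_counit_right W hW h1

lemma eps_piL (hW : IsWeakHopf W) (h l : H) : W.ε (h * piL W l) = W.ε (h * l) := by
  obtain ⟨n, p, q, h1⟩ := exists_rep (W.Δ 1)
  rw [piL_apply W h1]
  have := (hW.weak_counit h 1 l n p q h1).2
  rw [mul_one] at this
  rw [Finset.mul_sum, map_sum]
  simp only [mul_smul_comm, map_smul, smul_eq_mul]
  rw [this]
  exact Finset.sum_congr rfl fun t _ => mul_comm _ _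

lemma eps_piR (hW : IsWeakHopf W) (h m : H) : W.ε (piR W h * m) = W.ε (h * m) := by
  obtain ⟨n, p, q, h1⟩ := exists_rep (W.Δ 1)
  rw [piR_apply W h1]
  have := (hW.weak_counit h 1 m n p q h1).2
  rw [mul_one] at this
  rw [Finset.sum_mul, map_sum]
  simp only [smul_mul_assoc, map_smul, smul_eq_mul]
  rw [this]

lemma piL_mul_piL (hW : IsWeakHopf W) (h c : H) : piL W (h * piL W c) = piL W (h * c) := by
  obtain ⟨n, p, q, h1⟩ := exists_rep (W.Δ 1)
  rw [piL_apply W h1 (h * piL W c), piL_apply W h1 (h * c)]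
  apply Finset.sum_congr rfl
  intro t _
  rw [← mul_assoc (p t) h (piL W c), eps_piL W hW (p t * h) c, mul_assoc]

lemma piR_piR_mul (hW : IsWeakHopf W) (h c : H) : piR W (piR W c * h) = piR W (c * h) := by
  obtain ⟨n, p, q, h1⟩ := exists_rep (W.Δ 1)
  rw [piR_apply W h1 (piR W c * h), piR_apply W h1 (c * h)]
  apply Finset.sum_congr rfl
  intro t _
  rw [mul_assoc (piR W c) h (q t), eps_piR W hW c (h * q t), ← mul_assoc c h (q t)]

lemma delta_mul_one (hW : IsWeakHopf W) (h : H) : W.Δ h * W.Δ 1 = W.Δ h := by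
  rw [← hW.comul_mul, mul_one]

lemma one_delta_mul (hW : IsWeakHopf W) (h : H) : W.Δ 1 * W.Δ h = W.Δ h := by
  rw [← hW.comul_mul, one_mul]

lemma delta_pair_rep (hW : IsWeakHopf W) {h l : H} {n : ℕ} {x y : Fin n → H} {m : ℕ} {u v : Fin m → H}
    (hh : W.Δ h = ∑ i, x i ⊗ₜ[k] y i) (hl : W.Δ l = ∑ j, u j ⊗ₜ[k] v j) :
    W.Δ (h * l) = ∑ t : Fin (n * m),
      (x (pFst t) * u (pSnd t)) ⊗ₜ[k] (y (pFst t) * v (pSnd t)) := by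
  rw [hW.comul_mul, hh, hl, Finset.sum_mul_sum]
  simp only [Algebra.TensorProduct.tmul_mul_tmul]
  exact (sumPair fun i j => (x i * u j) ⊗ₜ[k] (y i * v j)).symm

end whopf

section whopf3
set_option synthInstance.maxHeartbeats 1000000
set_option maxHeartbeats 1000000
open TensorProduct LinearMap Finset

variable {k H M : Type*} [Field k] [Ring H] [Algebra k H] [AddCommMonoid M] [Module k M]
variable (W : WeakHopfData k H)

lemma choose_reps {n : ℕ} (z : Fin n → H) :
    ∃ (m : Fin n → ℕ) (c d : ∀ i, Fin (m i) → H),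
      ∀ i, W.Δ (z i) = ∑ r, c i r ⊗ₜ[k] d i r := by
  choose m c d h using fun i => exists_rep (W.Δ (z i))
  exact ⟨m, c, d, h⟩

lemma lT_delta {h : H} {n : ℕ} {x y : Fin n → H} (hh : W.Δ h = ∑ i, x i ⊗ₜ[k] y i)
    {m : Fin n → ℕ} {c d : ∀ i, Fin (m i) → H}
    (hcd : ∀ i, W.Δ (y i) = ∑ r, c i r ⊗ₜ[k] d i r) :
    (lTensor H W.Δ) (W.Δ h) = ∑ i, ∑ r, x i ⊗ₜ[k] (c i r ⊗ₜ[k] d i r) := by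
  rw [hh, map_sum]
  refine Finset.sum_congr rfl fun i _ => ?_
  rw [lTensor_tmul, hcd i, tmul_sum]

lemma rT_delta_assoc {h : H} {n : ℕ} {x y : Fin n → H} (hh : W.Δ h = ∑ i, x i ⊗ₜ[k] y i)
    {m : Fin n → ℕ} {a b : ∀ i, Fin (m i) → H}
    (hab : ∀ i, W.Δ (x i) = ∑ r, a i r ⊗ₜ[k] b i r) :
    (TensorProduct.assoc k H H H) ((rTensor H W.Δ) (W.Δ h)) =
      ∑ i, ∑ r, a i r ⊗ₜ[k] (b i r ⊗ₜ[k] y i) := by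
  rw [hh, map_sum]
  rw [map_sum (TensorProduct.assoc k H H H) (fun i => rTensor H W.Δ (x i ⊗ₜ[k] y i)) Finset.univ]
  refine Finset.sum_congr rfl fun i _ => ?_
  rw [rTensor_tmul, hab i, sum_tmul]
  rw [map_sum (TensorProduct.assoc k H H H) (fun r => (a i r ⊗ₜ[k] b i r) ⊗ₜ[k] y i) Finset.univ]
  simp only [assoc_tmul]

lemma swap3 (hW : IsWeakHopf W) (φ : H →ₗ[k] H →ₗ[k] H →ₗ[k] M) {h : H}
    {n : ℕ} {x y : Fin n → H} (hh : W.Δ h = ∑ i, x i ⊗ₜ[k] y i)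
    {m₁ : Fin n → ℕ} {a b : ∀ i, Fin (m₁ i) → H}
    (hab : ∀ i, W.Δ (x i) = ∑ r, a i r ⊗ₜ[k] b i r)
    {m₂ : Fin n → ℕ} {c d : ∀ i, Fin (m₂ i) → H}
    (hcd : ∀ i, W.Δ (y i) = ∑ r, c i r ⊗ₜ[k] d i r) :
    ∑ i, ∑ r, φ (a i r) (b i r) (y i) = ∑ i, ∑ r, φ (x i) (c i r) (d i r) := by
  have e := (rT_delta_assoc W hh hab).symm.trans ((hW.coassoc h).trans (lT_delta W hh hcd))
  have := congrArg (lift₃ φ) e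
  simpa only [map_sum, lift₃_tmul] using this

noncomputable def triMul (A B C : H →ₗ[k] H) : H →ₗ[k] H →ₗ[k] H →ₗ[k] H :=
  mk₃ (fun a b c => A a * B b * C c)
    (fun a a' b c => by simp [map_add, add_mul])
    (fun r a b c => by simp [map_smul, smul_mul_assoc])
    (fun a b b' c => by simp [map_add, mul_add, add_mul])
    (fun r a b c => by simp [map_smul, smul_mul_assoc, mul_smul_comm])
    (fun a b c c' => by simp [map_add, mul_add])
    (fun r a b c => by simp [map_smul, mul_smul_comm])

@[simp] lemma triMul_apply (A B C : H →ₗ[k] H) (a b c : H) :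
    triMul A B C a b c = A a * B b * C c := rfl

/-- (E): `∑ S(h⁽¹⁾) Π^L(h⁽²⁾) = S h`. -/
lemma sum_S_piL (hW : IsWeakHopf W) {h : H} {n : ℕ} {x y : Fin n → H}
    (hh : W.Δ h = ∑ i, x i ⊗ₜ[k] y i) :
    ∑ i, W.S (x i) * piL W (y i) = W.S h := by
  obtain ⟨m, c, d, hcd⟩ := choose_reps W y
  rw [← hW.antipode_mid h n x y hh m c d hcd]
  refine Finset.sum_congr rfl fun i _ => ?_
  rw [← hW.antipode_left (y i) (m i) (c i) (d i) (hcd i), Finset.mul_sum]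
  exact Finset.sum_congr rfl fun r _ => (mul_assoc _ _ _).symm

/-- (E'): `∑ Π^R(h⁽¹⁾) S(h⁽²⁾) = S h`. -/
lemma sum_piR_S (hW : IsWeakHopf W) {h : H} {n : ℕ} {x y : Fin n → H}
    (hh : W.Δ h = ∑ i, x i ⊗ₜ[k] y i) :
    ∑ i, piR W (x i) * W.S (y i) = W.S h := by
  obtain ⟨m₁, a, b, hab⟩ := choose_reps W x
  obtain ⟨m₂, c, d, hcd⟩ := choose_reps W y
  have hs := swap3 W hW (triMul W.S LinearMap.id W.S) hh hab hcd
  simp only [triMul_apply, LinearMap.id_coe, id_eq] at hs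
  calc ∑ i, piR W (x i) * W.S (y i)
      = ∑ i, ∑ r, W.S (a i r) * b i r * W.S (y i) := by
        refine Finset.sum_congr rfl fun i _ => ?_
        rw [← hW.antipode_right (x i) (m₁ i) (a i) (b i) (hab i), Finset.sum_mul]
    _ = ∑ i, ∑ r, W.S (x i) * c i r * W.S (d i r) := hs
    _ = W.S h := hW.antipode_mid h n x y hh m₂ c d hcd

end whopf3

section whopf4
set_option synthInstance.maxHeartbeats 1000000
set_option maxHeartbeats 1000000
open TensorProduct LinearMap Finset

variable {k H M : Type*} [Field k] [Ring H] [Algebra k H] [AddCommMonoid M] [Module k M]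
variable (W : WeakHopfData k H)

noncomputable def contrFst (f : H →ₗ[k] k) : H ⊗[k] (H ⊗[k] H) →ₗ[k] H ⊗[k] H :=
  (TensorProduct.lid k (H ⊗[k] H)).toLinearMap ∘ₗ rTensor (H ⊗[k] H) f

@[simp] lemma contrFst_tmul (f : H →ₗ[k] k) (a : H) (z : H ⊗[k] H) :
    contrFst f (a ⊗ₜ[k] z) = f a • z := by
  simp [contrFst]

noncomputable def contrLst (f : H →ₗ[k] k) : (H ⊗[k] H) ⊗[k] H →ₗ[k] H ⊗[k] H :=
  (TensorProduct.rid k (H ⊗[k] H)).toLinearMap ∘ₗ lTensor (H ⊗[k] H) f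

@[simp] lemma contrLst_tmul (f : H →ₗ[k] k) (z : H ⊗[k] H) (a : H) :
    contrLst f (z ⊗ₜ[k] a) = f a • z := by
  simp [contrLst]

lemma lTD1₁ (hW : IsWeakHopf W) {n : ℕ} {p q : Fin n → H}
    (h1 : W.Δ 1 = ∑ t, p t ⊗ₜ[k] q t) :
    (lTensor H W.Δ) (W.Δ 1) = ∑ t, ∑ s, p t ⊗ₜ[k] ((q t * p s) ⊗ₜ[k] q s) := by
  rw [hW.weak_comul_one₁]
  rw [show W.Δ 1 ⊗ₜ[k] (1:H) = ∑ t, (p t ⊗ₜ[k] q t) ⊗ₜ[k] (1:H) by rw [h1, sum_tmul]]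
  rw [map_sum (TensorProduct.assoc k H H H) _ Finset.univ]
  rw [show (1:H) ⊗ₜ[k] W.Δ 1 = ∑ s, (1:H) ⊗ₜ[k] (p s ⊗ₜ[k] q s) by rw [h1, tmul_sum]]
  rw [Finset.sum_mul_sum]
  simp only [assoc_tmul, Algebra.TensorProduct.tmul_mul_tmul, one_mul, mul_one]

lemma lTD1₂ (hW : IsWeakHopf W) {n : ℕ} {p q : Fin n → H}
    (h1 : W.Δ 1 = ∑ t, p t ⊗ₜ[k] q t) :
    (lTensor H W.Δ) (W.Δ 1) = ∑ t, ∑ s, p s ⊗ₜ[k] ((p t * q s) ⊗ₜ[k] q t) := by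
  rw [hW.weak_comul_one₂]
  rw [show W.Δ 1 ⊗ₜ[k] (1:H) = ∑ s, (p s ⊗ₜ[k] q s) ⊗ₜ[k] (1:H) by rw [h1, sum_tmul]]
  rw [map_sum (TensorProduct.assoc k H H H) _ Finset.univ]
  rw [show (1:H) ⊗ₜ[k] W.Δ 1 = ∑ t, (1:H) ⊗ₜ[k] (p t ⊗ₜ[k] q t) by rw [h1, tmul_sum]]
  rw [Finset.sum_mul_sum]
  simp only [assoc_tmul, Algebra.TensorProduct.tmul_mul_tmul, one_mul, mul_one]

/-- `(G)`: `Δ(Π^L(c)) = Δ(1)(Π^L(c) ⊗ 1)`. -/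
lemma delta_piL (hW : IsWeakHopf W) (c : H) :
    W.Δ (piL W c) = W.Δ 1 * (piL W c ⊗ₜ[k] 1) := by
  obtain ⟨n, p, q, h1⟩ := exists_rep (W.Δ 1)
  have e1 : contrFst (W.ε ∘ₗ mulRight k c) ((lTensor H W.Δ) (W.Δ 1)) = W.Δ (piL W c) := by
    conv_lhs => rw [h1]
    rw [map_sum, map_sum]
    simp only [lTensor_tmul, contrFst_tmul, coe_comp, Function.comp_apply, mulRight_apply]
    rw [piL_apply W h1, map_sum]
    simp only [map_smul]
  have e2 : contrFst (W.ε ∘ₗ mulRight k c) ((lTensor H W.Δ) (W.Δ 1)) =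
      W.Δ 1 * (piL W c ⊗ₜ[k] 1) := by
    rw [lTD1₂ W hW h1]
    simp only [map_sum, contrFst_tmul, coe_comp, Function.comp_apply, mulRight_apply]
    conv_rhs => rw [h1, piL_apply W h1, Finset.sum_mul]
    refine Finset.sum_congr rfl fun t _ => ?_
    rw [Algebra.TensorProduct.tmul_mul_tmul, mul_one, Finset.mul_sum, sum_tmul]
    refine Finset.sum_congr rfl fun s _ => ?_
    rw [mul_smul_comm, smul_tmul']
  exact e1.symm.trans e2

/-- `(G')`: `Δ(Π^R(c)) = (1 ⊗ Π^R(c))Δ(1)`. -/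
lemma delta_piR (hW : IsWeakHopf W) (c : H) :
    W.Δ (piR W c) = (1 ⊗ₜ[k] piR W c) * W.Δ 1 := by
  obtain ⟨n, p, q, h1⟩ := exists_rep (W.Δ 1)
  have hr : (rTensor H W.Δ) (W.Δ 1) =
      (TensorProduct.assoc k H H H).symm ((lTensor H W.Δ) (W.Δ 1)) := by
    rw [← hW.coassoc 1, LinearEquiv.symm_apply_apply]
  have e1 : contrLst (W.ε ∘ₗ mulLeft k c) ((rTensor H W.Δ) (W.Δ 1)) = W.Δ (piR W c) := by
    conv_lhs => rw [h1]
    rw [map_sum, map_sum]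
    simp only [rTensor_tmul, contrLst_tmul, coe_comp, Function.comp_apply, mulLeft_apply]
    rw [piR_apply W h1, map_sum]
    simp only [map_smul]
  have e2 : contrLst (W.ε ∘ₗ mulLeft k c) ((rTensor H W.Δ) (W.Δ 1)) =
      (1 ⊗ₜ[k] piR W c) * W.Δ 1 := by
    rw [hr, lTD1₂ W hW h1]
    rw [map_sum ((TensorProduct.assoc k H H H).symm) _ Finset.univ]
    simp only [map_sum, assoc_symm_tmul, contrLst_tmul, coe_comp, Function.comp_apply,
      mulLeft_apply]
    conv_rhs => rw [h1, Finset.mul_sum]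
    rw [Finset.sum_comm]
    refine Finset.sum_congr rfl fun s _ => ?_
    rw [Algebra.TensorProduct.tmul_mul_tmul, one_mul, piR_apply W h1, Finset.sum_mul,
      tmul_sum]
    refine Finset.sum_congr rfl fun t _ => ?_
    rw [smul_mul_assoc, tmul_smul]
  exact e1.symm.trans e2

noncomputable def triSmul (f g : H →ₗ[k] k) : H →ₗ[k] H →ₗ[k] H →ₗ[k] H :=
  mk₃ (fun α β γ => (f α * g γ) • β)
    (fun α α' β γ => by rw [map_add, add_mul, add_smul])
    (fun r α β γ => by rw [map_smul, smul_eq_mul, mul_assoc, mul_smul])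
    (fun α β β' γ => by rw [smul_add])
    (fun r α β γ => by rw [smul_comm])
    (fun α β γ γ' => by rw [map_add, mul_add, add_smul])
    (fun r α β γ => by rw [map_smul, smul_eq_mul, mul_left_comm, mul_smul])

@[simp] lemma triSmul_apply (f g : H →ₗ[k] k) (a b c : H) :
    triSmul f g a b c = (f a * g c) • b := rfl

lemma sum_smul_mul_sum_smul {n m : ℕ} (r : Fin n → k) (s : Fin m → k)
    (x : Fin n → H) (y : Fin m → H) :
    (∑ t, r t • x t) * (∑ u, s u • y u) = ∑ t, ∑ u, (r t * s u) • (x t * y u) := by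
  rw [Finset.sum_mul_sum]
  refine Finset.sum_congr rfl fun t _ => Finset.sum_congr rfl fun u _ => ?_
  rw [smul_mul_assoc, mul_smul_comm, smul_smul]

/-- `(N)`: images of `Π^L` and `Π^R` commute. -/
lemma piLR_comm (hW : IsWeakHopf W) (a b : H) :
    piL W a * piR W b = piR W b * piL W a := by
  obtain ⟨n, p, q, h1⟩ := exists_rep (W.Δ 1)
  have key := congrArg (lift₃ (triSmul (W.ε ∘ₗ mulRight k a) (W.ε ∘ₗ mulLeft k b)))
    ((lTD1₁ W hW h1).symm.trans (lTD1₂ W hW h1))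
  simp only [map_sum, lift₃_tmul, triSmul_apply, coe_comp, Function.comp_apply,
    mulRight_apply, mulLeft_apply] at key
  rw [piL_apply W h1, piR_apply W h1, sum_smul_mul_sum_smul, sum_smul_mul_sum_smul]
  calc ∑ t, ∑ u, (W.ε (p t * a) * W.ε (b * q u)) • (q t * p u) = _ := key
    _ = ∑ t, ∑ u, (W.ε (b * q t) * W.ε (p u * a)) • (p t * q u) := by
        refine Finset.sum_congr rfl fun t _ => Finset.sum_congr rfl fun u _ => ?_
        rw [mul_comm]

end whopf4

section whopf5
set_option synthInstance.maxHeartbeats 1000000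
set_option maxHeartbeats 1000000
open TensorProduct LinearMap Finset

variable {k H M : Type*} [Field k] [Ring H] [Algebra k H] [AddCommMonoid M] [Module k M]
variable (W : WeakHopfData k H)

lemma counit_right_rect (hW : IsWeakHopf W) {h : H} {n : ℕ} {m : Fin n → ℕ}
    {x y : ∀ i, Fin (m i) → H}
    (hh : W.Δ h = ∑ i, ∑ j, x i j ⊗ₜ[k] y i j) : ∑ i, ∑ j, W.ε (y i j) • x i j = h := by
  have e := hW.counit_right h
  rw [hh] at e
  simp only [map_sum, lTensor_tmul, rid_tmul] at e
  exact e

lemma counit_left_rect (hW : IsWeakHopf W) {h : H} {n : ℕ} {m : Fin n → ℕ}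
    {x y : ∀ i, Fin (m i) → H}
    (hh : W.Δ h = ∑ i, ∑ j, x i j ⊗ₜ[k] y i j) : ∑ i, ∑ j, W.ε (x i j) • y i j = h := by
  have e := hW.counit_left h
  rw [hh] at e
  simp only [map_sum, rTensor_tmul, lid_tmul] at e
  exact e

/-- `(iii)`: `g⁽¹⁾ ⊗ Π^L(g⁽²⁾) = 1⁽¹⁾g ⊗ 1⁽²⁾`. -/
lemma iiiL (hW : IsWeakHopf W) {g : H} {n : ℕ} {u v : Fin n → H}
    (hg : W.Δ g = ∑ j, u j ⊗ₜ[k] v j)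
    {N : ℕ} {p q : Fin N → H} (h1 : W.Δ 1 = ∑ t, p t ⊗ₜ[k] q t) :
    ∑ j, u j ⊗ₜ[k] piL W (v j) = ∑ t, (p t * g) ⊗ₜ[k] q t := by
  obtain ⟨m, w, z, hwz⟩ := choose_reps W p
  set ψ : H →ₗ[k] H →ₗ[k] H →ₗ[k] (H ⊗[k] H) := mk₃
      (fun α β γ => ∑ j, W.ε (β * v j) • ((α * u j) ⊗ₜ[k] γ))
      (fun α α' β γ => by
        simp only [add_mul, add_tmul, smul_add, Finset.sum_add_distrib])
      (fun r α β γ => by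
        simp only [smul_mul_assoc, smul_tmul', Finset.smul_sum, smul_smul, mul_comm])
      (fun α β β' γ => by
        simp only [add_mul, map_add, add_smul, Finset.sum_add_distrib])
      (fun r α β γ => by
        simp only [smul_mul_assoc, map_smul, smul_eq_mul, mul_smul, Finset.smul_sum])
      (fun α β γ γ' => by
        simp only [tmul_add, smul_add, Finset.sum_add_distrib])
      (fun r α β γ => by
        simp only [tmul_smul, Finset.smul_sum, smul_smul, mul_comm]) with hψ
  have key := congrArg (lift₃ ψ) ((lTD1₂ W hW h1).symm.trans ((hW.coassoc 1).symm.trans (rT_delta_assoc W h1 hwz)))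
  simp only [map_sum, lift₃_tmul, hψ, mk₃_apply] at key
  have lhs_eq : ∑ j, u j ⊗ₜ[k] piL W (v j) =
      ∑ t, ∑ s, ∑ j, W.ε ((p t * q s) * v j) • ((p s * u j) ⊗ₜ[k] q t) := by
    have e : ∑ j, u j ⊗ₜ[k] v j = ∑ s, ∑ j, (p s * u j) ⊗ₜ[k] (q s * v j) := by
      rw [← hg, ← one_delta_mul W hW g]
      conv_lhs => rw [h1, hg]
      rw [Finset.sum_mul_sum]
      simp only [Algebra.TensorProduct.tmul_mul_tmul]
    set Φ : H →ₗ[k] H →ₗ[k] H ⊗[k] H := LinearMap.mk₂ k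
        (fun c d => ∑ t, W.ε (p t * d) • (c ⊗ₜ[k] q t))
        (fun c c' d => by
          simp only [add_tmul, smul_add, Finset.sum_add_distrib])
        (fun r c d => by
          simp only [smul_tmul', Finset.smul_sum, smul_smul, mul_comm])
        (fun c d d' => by
          simp only [mul_add, map_add, add_smul, Finset.sum_add_distrib])
        (fun r c d => by
          simp only [mul_smul_comm, map_smul, smul_eq_mul, mul_smul, Finset.smul_sum]) with hΦ
    have e2 := congrArg (TensorProduct.lift Φ) e
    simp only [map_sum, TensorProduct.lift.tmul, hΦ, LinearMap.mk₂_apply] at e2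
    calc ∑ j, u j ⊗ₜ[k] piL W (v j)
        = ∑ j, ∑ t, W.ε (p t * v j) • (u j ⊗ₜ[k] q t) := by
          refine Finset.sum_congr rfl fun j _ => ?_
          rw [piL_apply W h1, tmul_sum]
          simp only [tmul_smul]
      _ = ∑ s, ∑ j, ∑ t, W.ε (p t * (q s * v j)) • ((p s * u j) ⊗ₜ[k] q t) := e2
      _ = ∑ s, ∑ t, ∑ j, W.ε (p t * (q s * v j)) • ((p s * u j) ⊗ₜ[k] q t) :=
          Finset.sum_congr rfl fun s _ => Finset.sum_comm
      _ = ∑ t, ∑ s, ∑ j, W.ε ((p t * q s) * v j) • ((p s * u j) ⊗ₜ[k] q t) := by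
          refine Finset.sum_comm.trans ?_
          refine Finset.sum_congr rfl fun t _ => Finset.sum_congr rfl fun s _ =>
            Finset.sum_congr rfl fun j _ => ?_
          rw [mul_assoc]
  rw [lhs_eq, key]
  refine Finset.sum_congr rfl fun t _ => ?_
  have dpg : W.Δ (p t * g) = ∑ r, ∑ j, (w t r * u j) ⊗ₜ[k] (z t r * v j) := by
    rw [hW.comul_mul, hwz t, hg, Finset.sum_mul_sum]
    simp only [Algebra.TensorProduct.tmul_mul_tmul]
  calc ∑ r, ∑ j, W.ε (z t r * v j) • ((w t r * u j) ⊗ₜ[k] q t)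
      = (∑ r, ∑ j, W.ε (z t r * v j) • (w t r * u j)) ⊗ₜ[k] q t := by
        rw [sum_tmul]
        refine Finset.sum_congr rfl fun r _ => ?_
        rw [sum_tmul]
        refine Finset.sum_congr rfl fun j _ => ?_
        rw [smul_tmul']
    _ = (p t * g) ⊗ₜ[k] q t := by rw [counit_right_rect W hW dpg]

/-- `(iii-R)`: `Π^R(g⁽¹⁾) ⊗ g⁽²⁾ = 1⁽¹⁾ ⊗ g1⁽²⁾`. -/
lemma iiiR (hW : IsWeakHopf W) {g : H} {n : ℕ} {x y : Fin n → H}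
    (hg : W.Δ g = ∑ i, x i ⊗ₜ[k] y i)
    {N : ℕ} {p q : Fin N → H} (h1 : W.Δ 1 = ∑ t, p t ⊗ₜ[k] q t) :
    ∑ i, piR W (x i) ⊗ₜ[k] y i = ∑ t, p t ⊗ₜ[k] (g * q t) := by
  obtain ⟨m, c, d, hcd⟩ := choose_reps W q
  set ψ : H →ₗ[k] H →ₗ[k] H →ₗ[k] (H ⊗[k] H) := mk₃
      (fun α β γ => ∑ i, W.ε (x i * β) • (α ⊗ₜ[k] (y i * γ)))
      (fun α α' β γ => by
        simp only [add_tmul, smul_add, Finset.sum_add_distrib])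
      (fun r α β γ => by
        simp only [smul_tmul', Finset.smul_sum, smul_smul, mul_comm])
      (fun α β β' γ => by
        simp only [mul_add, map_add, add_smul, Finset.sum_add_distrib])
      (fun r α β γ => by
        simp only [mul_smul_comm, map_smul, smul_eq_mul, mul_smul, Finset.smul_sum])
      (fun α β γ γ' => by
        simp only [mul_add, tmul_add, smul_add, Finset.sum_add_distrib])
      (fun r α β γ => by
        simp only [mul_smul_comm, tmul_smul, Finset.smul_sum, smul_smul, mul_comm]) with hψ
  have swap : (∑ t, ∑ s, p s ⊗ₜ[k] ((p t * q s) ⊗ₜ[k] q t)) =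
      ∑ t, ∑ s, p t ⊗ₜ[k] ((p s * q t) ⊗ₜ[k] q s) := Finset.sum_comm
  have key := congrArg (lift₃ ψ)
    ((swap.symm.trans (lTD1₂ W hW h1).symm).trans (lT_delta W h1 hcd))
  simp only [map_sum, lift₃_tmul, hψ, mk₃_apply] at key
  have lhs_eq : ∑ i, piR W (x i) ⊗ₜ[k] y i =
      ∑ t, ∑ s, ∑ i, W.ε (x i * (p s * q t)) • (p t ⊗ₜ[k] (y i * q s)) := by
    have e : ∑ i, x i ⊗ₜ[k] y i = ∑ s, ∑ i, (x i * p s) ⊗ₜ[k] (y i * q s) := by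
      rw [← hg, ← delta_mul_one W hW g]
      conv_lhs => rw [hg, h1]
      rw [Finset.sum_mul_sum, Finset.sum_comm]
      simp only [Algebra.TensorProduct.tmul_mul_tmul]
    set Φ : H →ₗ[k] H →ₗ[k] H ⊗[k] H := LinearMap.mk₂ k
        (fun a b => ∑ t, W.ε (a * q t) • (p t ⊗ₜ[k] b))
        (fun a a' b => by
          simp only [add_mul, map_add, add_smul, Finset.sum_add_distrib])
        (fun r a b => by
          simp only [smul_mul_assoc, map_smul, smul_eq_mul, mul_smul, Finset.smul_sum])
        (fun a b b' => by
          simp only [tmul_add, smul_add, Finset.sum_add_distrib])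
        (fun r a b => by
          simp only [tmul_smul, Finset.smul_sum, smul_smul, mul_comm]) with hΦ
    have e2 := congrArg (TensorProduct.lift Φ) e
    simp only [map_sum, TensorProduct.lift.tmul, hΦ, LinearMap.mk₂_apply] at e2
    calc ∑ i, piR W (x i) ⊗ₜ[k] y i
        = ∑ i, ∑ t, W.ε (x i * q t) • (p t ⊗ₜ[k] y i) := by
          refine Finset.sum_congr rfl fun i _ => ?_
          rw [piR_apply W h1, sum_tmul]
          refine Finset.sum_congr rfl fun t _ => ?_
          rw [smul_tmul']
      _ = ∑ s, ∑ i, ∑ t, W.ε ((x i * p s) * q t) • (p t ⊗ₜ[k] (y i * q s)) := e2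
      _ = ∑ s, ∑ t, ∑ i, W.ε ((x i * p s) * q t) • (p t ⊗ₜ[k] (y i * q s)) :=
          Finset.sum_congr rfl fun s _ => Finset.sum_comm
      _ = ∑ t, ∑ s, ∑ i, W.ε (x i * (p s * q t)) • (p t ⊗ₜ[k] (y i * q s)) := by
          refine Finset.sum_comm.trans ?_
          refine Finset.sum_congr rfl fun t _ => Finset.sum_congr rfl fun s _ =>
            Finset.sum_congr rfl fun i _ => ?_
          rw [mul_assoc]
  rw [lhs_eq, key]
  refine Finset.sum_congr rfl fun t _ => ?_
  have dgq : W.Δ (g * q t) = ∑ i, ∑ r, (x i * c t r) ⊗ₜ[k] (y i * d t r) := by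
    rw [hW.comul_mul, hg, hcd t, Finset.sum_mul_sum]
    simp only [Algebra.TensorProduct.tmul_mul_tmul]
  calc ∑ r, ∑ i, W.ε (x i * c t r) • (p t ⊗ₜ[k] (y i * d t r))
      = ∑ i, ∑ r, W.ε (x i * c t r) • (p t ⊗ₜ[k] (y i * d t r)) := Finset.sum_comm
    _ = p t ⊗ₜ[k] (∑ i, ∑ r, W.ε (x i * c t r) • (y i * d t r)) := by
        rw [tmul_sum]
        refine Finset.sum_congr rfl fun i _ => ?_
        rw [tmul_sum]
        refine Finset.sum_congr rfl fun r _ => ?_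
        rw [tmul_smul]
    _ = p t ⊗ₜ[k] (g * q t) := by rw [counit_left_rect W hW dgq]

end whopf5

section whopf6
set_option synthInstance.maxHeartbeats 1000000
set_option maxHeartbeats 1000000
open TensorProduct LinearMap Finset

variable {k H M : Type*} [Field k] [Ring H] [Algebra k H] [AddCommMonoid M] [Module k M]
variable (W : WeakHopfData k H)

/-- `(F)`: `∑ h⁽¹⁾ Π^L(c) S(h⁽²⁾) = Π^L(hc)`. -/
lemma Fid (hW : IsWeakHopf W) (c : H) {h : H} {n : ℕ} {x y : Fin n → H}
    (hh : W.Δ h = ∑ i, x i ⊗ₜ[k] y i) :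
    ∑ i, (x i * piL W c) * W.S (y i) = piL W (h * c) := by
  have hd : W.Δ (h * piL W c) = ∑ i, (x i * piL W c) ⊗ₜ[k] y i := by
    rw [hW.comul_mul, delta_piL W hW c, ← mul_assoc, delta_mul_one W hW, hh,
      Finset.sum_mul]
    simp only [Algebra.TensorProduct.tmul_mul_tmul, mul_one]
  have := hW.antipode_left (h * piL W c) n (fun i => x i * piL W c) y hd
  rw [this, piL_mul_piL W hW]

/-- `(F')`: `∑ S(l⁽¹⁾) Π^R(c) l⁽²⁾ = Π^R(cl)`. -/
lemma Fid' (hW : IsWeakHopf W) (c : H) {l : H} {n : ℕ} {u v : Fin n → H}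
    (hl : W.Δ l = ∑ j, u j ⊗ₜ[k] v j) :
    ∑ j, W.S (u j) * (piR W c * v j) = piR W (c * l) := by
  have hd : W.Δ (piR W c * l) = ∑ j, u j ⊗ₜ[k] (piR W c * v j) := by
    rw [hW.comul_mul, delta_piR W hW c, mul_assoc, one_delta_mul W hW, hl,
      Finset.mul_sum]
    simp only [Algebra.TensorProduct.tmul_mul_tmul, one_mul]
  have := hW.antipode_right (piR W c * l) n u (fun j => piR W c * v j) hd
  rw [this, piR_piR_mul W hW]

/-- `(A4)`: `∑ (h⁽¹⁾l⁽¹⁾) S(l⁽²⁾) S(h⁽²⁾) = Π^L(hl)`. -/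
lemma A4 (hW : IsWeakHopf W) {h l : H} {n : ℕ} {x y : Fin n → H}
    (hh : W.Δ h = ∑ i, x i ⊗ₜ[k] y i) {m : ℕ} {u v : Fin m → H}
    (hl : W.Δ l = ∑ j, u j ⊗ₜ[k] v j) :
    ∑ i, ∑ j, (x i * u j) * (W.S (v j) * W.S (y i)) = piL W (h * l) := by
  rw [← Fid W hW l hh]
  refine Finset.sum_congr rfl fun i _ => ?_
  calc ∑ j, (x i * u j) * (W.S (v j) * W.S (y i))
      = ∑ j, x i * ((u j * W.S (v j)) * W.S (y i)) := by
        refine Finset.sum_congr rfl fun j _ => ?_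
        rw [mul_assoc, ← mul_assoc (u j)]
    _ = x i * ((∑ j, u j * W.S (v j)) * W.S (y i)) := by
        rw [← Finset.mul_sum, ← Finset.sum_mul]
    _ = (x i * piL W l) * W.S (y i) := by
        rw [hW.antipode_left l m u v hl, mul_assoc]

/-- `(A3)`: `∑ S(l⁽¹⁾) S(h⁽¹⁾) (h⁽²⁾l⁽²⁾) = Π^R(hl)`. -/
lemma A3 (hW : IsWeakHopf W) {h l : H} {n : ℕ} {x y : Fin n → H}
    (hh : W.Δ h = ∑ i, x i ⊗ₜ[k] y i) {m : ℕ} {u v : Fin m → H}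
    (hl : W.Δ l = ∑ j, u j ⊗ₜ[k] v j) :
    ∑ i, ∑ j, (W.S (u j) * W.S (x i)) * (y i * v j) = piR W (h * l) := by
  rw [← Fid' W hW h hl, Finset.sum_comm]
  refine Finset.sum_congr rfl fun j _ => ?_
  calc ∑ i, (W.S (u j) * W.S (x i)) * (y i * v j)
      = ∑ i, W.S (u j) * ((W.S (x i) * y i) * v j) := by
        refine Finset.sum_congr rfl fun i _ => ?_
        rw [mul_assoc, ← mul_assoc (W.S (x i))]
    _ = W.S (u j) * ((∑ i, W.S (x i) * y i) * v j) := by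
        rw [← Finset.mul_sum, ← Finset.sum_mul]
    _ = W.S (u j) * (piR W h * v j) := by
        rw [hW.antipode_right h n x y hh]

lemma S_one (hW : IsWeakHopf W) : W.S 1 = 1 := by
  obtain ⟨n, p, q, h1⟩ := exists_rep (W.Δ 1)
  obtain ⟨m, c, d, hcd⟩ := choose_reps W q
  have e1 : lift₃ (triMul W.S LinearMap.id W.S) ((lTensor H W.Δ) (W.Δ 1)) = W.S 1 := by
    rw [lT_delta W h1 hcd]
    simp only [map_sum, lift₃_tmul, triMul_apply, LinearMap.id_coe, id_eq]
    exact hW.antipode_mid 1 n p q h1 m c d hcd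
  have e2 : lift₃ (triMul W.S LinearMap.id W.S) ((lTensor H W.Δ) (W.Δ 1)) = 1 := by
    rw [lTD1₁ W hW h1]
    simp only [map_sum, lift₃_tmul, triMul_apply, LinearMap.id_coe, id_eq]
    have e3 : ∀ t s, W.S (p t) * (q t * p s) * W.S (q s) =
        ((W.S (p t) * q t) * p s) * W.S (q s) := by
      intro t s
      rw [← mul_assoc (W.S (p t)) (q t) (p s)]
    calc ∑ t, ∑ s, W.S (p t) * (q t * p s) * W.S (q s)
        = ∑ s, ∑ t, ((W.S (p t) * q t) * p s) * W.S (q s) := by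
          refine Finset.sum_comm.trans ?_
          exact Finset.sum_congr rfl fun s _ => Finset.sum_congr rfl fun t _ => e3 t s
      _ = ∑ s, ((∑ t, W.S (p t) * q t) * p s) * W.S (q s) := by
          simp only [← Finset.sum_mul]
      _ = ∑ s, p s * W.S (q s) := by
          rw [hW.antipode_right 1 n p q h1, piR_one W hW]
          simp only [one_mul]
      _ = 1 := by rw [hW.antipode_left 1 n p q h1, piL_one W hW]
  exact e1.symm.trans e2

end whopf6

section whopf7
set_option synthInstance.maxHeartbeats 1000000
set_option maxHeartbeats 1000000
open TensorProduct LinearMap Finset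

variable {k H M : Type*} [Field k] [Ring H] [Algebra k H] [AddCommMonoid M] [Module k M]
variable (W : WeakHopfData k H)

lemma sum_swap_pairs {n m : ℕ} {nr : Fin n → ℕ} {ms : Fin m → ℕ}
    (F : ∀ i : Fin n, Fin (nr i) → ∀ j : Fin m, Fin (ms j) → M) :
    ∑ i, ∑ r, ∑ j, ∑ s, F i r j s = ∑ j, ∑ s, ∑ i, ∑ r, F i r j s := by
  calc ∑ i, ∑ r, ∑ j, ∑ s, F i r j s
      = ∑ i, ∑ j, ∑ r, ∑ s, F i r j s :=
        Finset.sum_congr rfl fun i _ => Finset.sum_comm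
    _ = ∑ j, ∑ i, ∑ r, ∑ s, F i r j s := Finset.sum_comm
    _ = ∑ j, ∑ i, ∑ s, ∑ r, F i r j s :=
        Finset.sum_congr rfl fun j _ => Finset.sum_congr rfl fun i _ => Finset.sum_comm
    _ = ∑ j, ∑ s, ∑ i, ∑ r, F i r j s :=
        Finset.sum_congr rfl fun j _ => Finset.sum_comm

lemma S_mul (hW : IsWeakHopf W) (h l : H) : W.S (h * l) = W.S l * W.S h := by
  obtain ⟨n, x, y, hh⟩ := exists_rep (W.Δ h)
  obtain ⟨m, u, v, hl⟩ := exists_rep (W.Δ l)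
  obtain ⟨nr, a, b, hab⟩ := choose_reps W x
  obtain ⟨nc, c, d, hcd⟩ := choose_reps W y
  obtain ⟨ms, a', b', hab'⟩ := choose_reps W u
  obtain ⟨me, e, f, hef⟩ := choose_reps W v
  calc W.S (h * l)
      = ∑ i, ∑ j, W.S (x i * u j) * piL W (y i * v j) := by
        rw [← sumPair (fun i j => W.S (x i * u j) * piL W (y i * v j))]
        exact (sum_S_piL W hW (delta_pair_rep W hW hh hl)).symm
    _ = ∑ i, ∑ j, ∑ r, ∑ s,
        (W.S (x i * u j) * (c i r * e j s)) * (W.S (f j s) * W.S (d i r)) := by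
        refine Finset.sum_congr rfl fun i _ => Finset.sum_congr rfl fun j _ => ?_
        rw [← A4 W hW (hcd i) (hef j), Finset.mul_sum]
        refine Finset.sum_congr rfl fun r _ => ?_
        rw [Finset.mul_sum]
        exact Finset.sum_congr rfl fun s _ => (mul_assoc _ _ _).symm
    _ = ∑ i, ∑ r, ∑ j, ∑ s,
        (W.S (x i * u j) * (c i r * e j s)) * (W.S (f j s) * W.S (d i r)) := by
        refine Finset.sum_congr rfl fun i _ => Finset.sum_comm
    _ = ∑ j, ∑ s, ∑ i, ∑ r,
        (W.S (x i * u j) * (c i r * e j s)) * (W.S (f j s) * W.S (d i r)) := by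
        exact sum_swap_pairs _
    _ = ∑ j, ∑ s, ∑ i, ∑ r,
        (W.S (a i r * u j) * (b i r * e j s)) * (W.S (f j s) * W.S (y i)) := by
        refine Finset.sum_congr rfl fun j _ => Finset.sum_congr rfl fun s _ => ?_
        have hs := swap3 W hW
          (triMul (W.S ∘ₗ mulRight k (u j)) (mulRight k (e j s))
            (mulLeft k (W.S (f j s)) ∘ₗ W.S)) hh hab hcd
        simp only [triMul_apply, coe_comp, Function.comp_apply, mulRight_apply,
          mulLeft_apply] at hs
        exact hs.symm
    _ = ∑ i, ∑ r, ∑ j, ∑ s,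
        (W.S (a i r * u j) * (b i r * e j s)) * (W.S (f j s) * W.S (y i)) :=
        (sum_swap_pairs _).symm
    _ = ∑ i, ∑ r, ∑ j, ∑ s,
        (W.S (a i r * a' j s) * (b i r * b' j s)) * (W.S (v j) * W.S (y i)) := by
        refine Finset.sum_congr rfl fun i _ => Finset.sum_congr rfl fun r _ => ?_
        have hs := swap3 W hW
          (triMul (W.S ∘ₗ mulLeft k (a i r)) (mulLeft k (b i r))
            (mulRight k (W.S (y i)) ∘ₗ W.S)) hl hab' hef
        simp only [triMul_apply, coe_comp, Function.comp_apply, mulRight_apply,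
          mulLeft_apply] at hs
        exact hs.symm
    _ = ∑ i, ∑ j, ∑ r, ∑ s,
        (W.S (a i r * a' j s) * (b i r * b' j s)) * (W.S (v j) * W.S (y i)) :=
        Finset.sum_congr rfl fun i _ => Finset.sum_comm
    _ = ∑ i, ∑ j, ∑ r, ∑ s,
        ((W.S (a' j s) * W.S (a i r)) * (b i r * b' j s)) * (W.S (v j) * W.S (y i)) := by
        refine Finset.sum_congr rfl fun i _ => Finset.sum_congr rfl fun j _ => ?_
        have e1 : ∑ r, ∑ s, W.S (a i r * a' j s) * (b i r * b' j s) =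
            ∑ r, ∑ s, (W.S (a' j s) * W.S (a i r)) * (b i r * b' j s) := by
          rw [← sumPair (fun r s => W.S (a i r * a' j s) * (b i r * b' j s)),
            hW.antipode_right (x i * u j) _ _ _ (delta_pair_rep W hW (hab i) (hab' j)),
            ← A3 W hW (hab i) (hab' j)]
        have e2 := congrArg (· * (W.S (v j) * W.S (y i))) e1
        simp only [Finset.sum_mul] at e2
        exact e2
    _ = ∑ i, ∑ r, ∑ j, ∑ s,
        ((W.S (a' j s) * W.S (a i r)) * (b i r * b' j s)) * (W.S (v j) * W.S (y i)) :=
        Finset.sum_congr rfl fun i _ => Finset.sum_comm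
    _ = ∑ i, ∑ r, ∑ j, ∑ s,
        ((W.S (u j) * W.S (a i r)) * (b i r * e j s)) * (W.S (f j s) * W.S (y i)) := by
        refine Finset.sum_congr rfl fun i _ => Finset.sum_congr rfl fun r _ => ?_
        have hs := swap3 W hW
          (triMul (mulRight k (W.S (a i r)) ∘ₗ W.S) (mulLeft k (b i r))
            (mulRight k (W.S (y i)) ∘ₗ W.S)) hl hab' hef
        simp only [triMul_apply, coe_comp, Function.comp_apply, mulRight_apply,
          mulLeft_apply] at hs
        exact hs
    _ = ∑ i, ∑ j, ∑ r, ∑ s,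
        W.S (u j) * ((W.S (a i r) * b i r) * ((e j s * W.S (f j s)) * W.S (y i))) := by
        refine Finset.sum_congr rfl fun i _ => ?_
        refine Finset.sum_comm.trans ?_
        refine Finset.sum_congr rfl fun j _ => Finset.sum_congr rfl fun r _ =>
          Finset.sum_congr rfl fun s _ => ?_
        simp only [mul_assoc]
    _ = ∑ i, ∑ j, W.S (u j) * (piR W (x i) * (piL W (v j) * W.S (y i))) := by
        refine Finset.sum_congr rfl fun i _ => Finset.sum_congr rfl fun j _ => ?_
        rw [← hW.antipode_right (x i) _ (a i) (b i) (hab i),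
          ← hW.antipode_left (v j) _ (e j) (f j) (hef j)]
        simp only [← Finset.mul_sum, ← Finset.sum_mul]
    _ = ∑ i, ∑ j, W.S (u j) * (piL W (v j) * (piR W (x i) * W.S (y i))) := by
        refine Finset.sum_congr rfl fun i _ => Finset.sum_congr rfl fun j _ => ?_
        rw [← mul_assoc (piR W (x i)), ← piLR_comm W hW (v j) (x i), mul_assoc]
    _ = W.S l * W.S h := by
        rw [← sum_S_piL W hW hl, ← sum_piR_S W hW hh, Finset.sum_mul_sum,
          Finset.sum_comm]
        refine Finset.sum_congr rfl fun i _ => Finset.sum_congr rfl fun j _ => ?_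
        rw [mul_assoc]

end whopf7

section whopf8
set_option synthInstance.maxHeartbeats 1000000
set_option maxHeartbeats 1000000
open TensorProduct LinearMap Finset

variable {k H : Type*} [Field k] [Ring H] [Algebra k H]
variable (W : WeakHopfData k H)

lemma Sinv_one (hW : IsWeakHopf W) : W.Sinv 1 = 1 := by
  have := hW.Sinv_S 1
  rwa [S_one W hW] at this

lemma Sinv_mul (hW : IsWeakHopf W) (a b : H) :
    W.Sinv (a * b) = W.Sinv b * W.Sinv a := by
  have e : a * b = W.S (W.Sinv b * W.Sinv a) := by
    rw [S_mul W hW, hW.S_Sinv, hW.S_Sinv]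
  rw [e, hW.Sinv_S]

/-- `(B)`: `∑ S⁻¹(1⁽²⁾) 1⁽¹⁾ = 1`. -/
lemma sum_Sinv_one (hW : IsWeakHopf W) {n : ℕ} {p q : Fin n → H}
    (hone : W.Δ 1 = ∑ t, p t ⊗ₜ[k] q t) : ∑ t, W.Sinv (q t) * p t = 1 := by
  have e : ∑ t, W.S (p t) * q t = 1 := by
    rw [hW.antipode_right 1 n p q hone, piR_one W hW]
  calc ∑ t, W.Sinv (q t) * p t
      = ∑ t, W.Sinv (W.S (p t) * q t) := by
        refine Finset.sum_congr rfl fun t _ => ?_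
        rw [Sinv_mul W hW, hW.Sinv_S]
    _ = W.Sinv (∑ t, W.S (p t) * q t) := (map_sum W.Sinv _ _).symm
    _ = 1 := by rw [e, Sinv_one W hW]

/-- canonical representation of `Δ(1)` with second legs in `H^L`. -/
lemma exists_rep_one_HL (hW : IsWeakHopf W) :
    ∃ (n : ℕ) (p q : Fin n → H),
      W.Δ 1 = ∑ t, p t ⊗ₜ[k] q t ∧ ∀ t, q t ∈ HL W := by
  obtain ⟨n, p, q, hone⟩ := exists_rep (W.Δ 1)
  refine ⟨n, p, fun t => piL W (q t), ?_, fun t => ⟨q t, rfl⟩⟩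
  have e := iiiL W hW hone hone
  simp only [mul_one] at e
  exact hone.trans e.symm
end whopf8

section whopf9
set_option synthInstance.maxHeartbeats 1000000
set_option maxHeartbeats 1000000
open TensorProduct LinearMap Finset

variable {k H A : Type*} [Field k] [Ring H] [Algebra k H] [Ring A] [Algebra k A]
variable (W : WeakHopfData k H)

noncomputable def triB {B : Type*} [Ring B] [Algebra k B] (F G K : H →ₗ[k] B) :
    H →ₗ[k] H →ₗ[k] H →ₗ[k] B :=
  mk₃ (fun a b c => F a * G b * K c)
    (fun a a' b c => by simp [map_add, add_mul])
    (fun r a b c => by simp [map_smul, smul_mul_assoc])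
    (fun a b b' c => by simp [map_add, mul_add, add_mul])
    (fun r a b c => by simp [map_smul, smul_mul_assoc, mul_smul_comm])
    (fun a b c c' => by simp [map_add, mul_add])
    (fun r a b c => by simp [map_smul, mul_smul_comm])

@[simp] lemma triB_apply {B : Type*} [Ring B] [Algebra k B] (F G K : H →ₗ[k] B)
    (a b c : H) : triB F G K a b c = F a * G b * K c := rfl

lemma sigmaTilde_rep (ρ : H →ₗ[k] A →ₗ[k] A) (σc : H →ₗ[k] H →ₗ[k] A) {h g : H}
    {n : ℕ} {x y : Fin n → H} (hh : W.Δ h = ∑ i, x i ⊗ₜ[k] y i)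
    {m : ℕ} {u v : Fin m → H} (hg : W.Δ g = ∑ j, u j ⊗ₜ[k] v j) :
    sigmaTilde W ρ σc h g = ∑ i, ∑ j, ρ (x i * u j) 1 * σc (y i) (v j) := by
  rw [sigmaTilde, hh, hg, sum_tmul]
  simp only [tmul_sum, map_sum, tensorTensorTensorComm_tmul, map_tmul,
    TensorProduct.lift.tmul, mul'_apply, coe_comp, Function.comp_apply, flip_apply]

lemma sigmaTilde_eq (hW : IsWeakHopf W) (ρ : H →ₗ[k] A →ₗ[k] A)
    (hc1 : cond1 W ρ) (σb σc : H →ₗ[k] H →ₗ[k] A)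
    (hc15 : cond15 W ρ (fun h g => σc h g))
    (hc16 : cond16 W ρ (fun h g => σb h g) (fun h g => σc h g)) (h g : H) :
    sigmaTilde W ρ σc h g = σc h g := by
  obtain ⟨np, p, q, hone, hqHL⟩ := exists_rep_one_HL W hW
  obtain ⟨n, x, y, hh⟩ := exists_rep (W.Δ h)
  obtain ⟨m, u, v, hg⟩ := exists_rep (W.Δ g)
  obtain ⟨nr, a, b, hab⟩ := choose_reps W x
  obtain ⟨nc, c, d, hcd⟩ := choose_reps W y
  obtain ⟨ms, a', b', hab'⟩ := choose_reps W u
  obtain ⟨me, e, f, hef⟩ := choose_reps W v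
  calc sigmaTilde W ρ σc h g
      = ∑ i, ∑ j, ρ (x i * u j) 1 * σc (y i) (v j) := sigmaTilde_rep W ρ σc hh hg
    _ = ∑ i, ∑ j, ∑ r, ∑ s,
        (σc (a i r) (a' j s) * σb (b i r) (b' j s)) * σc (y i) (v j) := by
        refine Finset.sum_congr rfl fun i _ => Finset.sum_congr rfl fun j _ => ?_
        rw [← (hc16 (x i) (u j) _ (a i) (b i) _ (a' j) (b' j) (hab i) (hab' j)).2]
        simp only [Finset.sum_mul]
    _ = ∑ i, ∑ r, ∑ j, ∑ s,
        (σc (a i r) (a' j s) * σb (b i r) (b' j s)) * σc (y i) (v j) :=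
        Finset.sum_congr rfl fun i _ => Finset.sum_comm
    _ = ∑ j, ∑ s, ∑ i, ∑ r,
        (σc (a i r) (a' j s) * σb (b i r) (b' j s)) * σc (y i) (v j) :=
        sum_swap_pairs _
    _ = ∑ j, ∑ s, ∑ i, ∑ r,
        (σc (x i) (a' j s) * σb (c i r) (b' j s)) * σc (d i r) (v j) := by
        refine Finset.sum_congr rfl fun j _ => Finset.sum_congr rfl fun s _ => ?_
        have hs := swap3 W hW
          (triB (σc.flip (a' j s)) (σb.flip (b' j s)) (σc.flip (v j))) hh hab hcd
        simp only [triB_apply, flip_apply] at hs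
        exact hs
    _ = ∑ i, ∑ r, ∑ j, ∑ s,
        (σc (x i) (a' j s) * σb (c i r) (b' j s)) * σc (d i r) (v j) :=
        (sum_swap_pairs _).symm
    _ = ∑ i, ∑ r, ∑ j, ∑ s,
        (σc (x i) (u j) * σb (c i r) (e j s)) * σc (d i r) (f j s) := by
        refine Finset.sum_congr rfl fun i _ => Finset.sum_congr rfl fun r _ => ?_
        have hs := swap3 W hW
          (triB (σc (x i)) (σb (c i r)) (σc (d i r))) hg hab' hef
        simp only [triB_apply] at hs
        exact hs
    _ = ∑ i, ∑ j, ∑ r, ∑ s,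
        (σc (x i) (u j) * σb (c i r) (e j s)) * σc (d i r) (f j s) :=
        Finset.sum_congr rfl fun i _ => Finset.sum_comm
    _ = ∑ i, ∑ j, σc (x i) (u j) * ρ (y i) (ρ (v j) 1) := by
        refine Finset.sum_congr rfl fun i _ => Finset.sum_congr rfl fun j _ => ?_
        calc ∑ r, ∑ s, (σc (x i) (u j) * σb (c i r) (e j s)) * σc (d i r) (f j s)
            = ∑ r, ∑ s, σc (x i) (u j) * (σb (c i r) (e j s) * σc (d i r) (f j s)) := by
              exact Finset.sum_congr rfl fun r _ => Finset.sum_congr rfl fun s _ =>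
                mul_assoc _ _ _
          _ = σc (x i) (u j) * ∑ r, ∑ s, σb (c i r) (e j s) * σc (d i r) (f j s) := by
              simp only [← Finset.mul_sum]
          _ = σc (x i) (u j) * ρ (y i) (ρ (v j) 1) := by
              rw [(hc16 (y i) (v j) _ (c i) (d i) _ (e j) (f j) (hcd i) (hef j)).1]
    _ = ∑ i, ∑ t, σc (x i) (p t * g) * ρ (y i) (ρ (q t) 1) := by
        refine Finset.sum_congr rfl fun i _ => ?_
        set Φ : H →ₗ[k] H →ₗ[k] A := LinearMap.mk₂ k
            (fun cc dd => σc (x i) cc * ρ (y i) (ρ dd 1))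
            (fun cc cc' dd => by rw [map_add, add_mul])
            (fun r cc dd => by
              rw [map_smul, smul_mul_assoc])
            (fun cc dd dd' => by
              rw [map_add, LinearMap.add_apply, map_add, mul_add])
            (fun r cc dd => by
              rw [map_smul, LinearMap.smul_apply, map_smul, mul_smul_comm]) with hΦ
        have e2 := congrArg (TensorProduct.lift Φ) (iiiL W hW hg hone)
        simp only [map_sum, TensorProduct.lift.tmul, hΦ, LinearMap.mk₂_apply] at e2
        rw [← e2]
        refine Finset.sum_congr rfl fun j _ => ?_
        rw [hc1 (v j)]
    _ = ∑ t, σc h (W.Sinv (q t) * (p t * g)) := by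
        rw [Finset.sum_comm]
        refine Finset.sum_congr rfl fun t _ => ?_
        exact hc15 h (p t * g) (q t) (hqHL t) n x y hh
    _ = σc h g := by
        have e3 : ∑ t, W.Sinv (q t) * (p t * g) = g := by
          calc ∑ t, W.Sinv (q t) * (p t * g)
              = (∑ t, W.Sinv (q t) * p t) * g := by
                rw [Finset.sum_mul]
                exact Finset.sum_congr rfl fun t _ => (mul_assoc _ _ _).symm
            _ = g := by rw [sum_Sinv_one W hW hone, one_mul]
        rw [← map_sum (σc h) _ Finset.univ, e3]

end whopf9

/-- if `σ̄` satisfies (14)–(16), then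
`σ̃(h,k) := (h⁽¹⁾k⁽¹⁾·1_A)σ̄(h⁽²⁾,k⁽²⁾)` satisfies (13)–(16). -/
theorem statement5 {k H A : Type*} [Field k] [Ring H] [Algebra k H] [Ring A] [Algebra k A]
    (W : WeakHopfData k H) (hW : IsWeakHopf W) (ρ : H →ₗ[k] A →ₗ[k] A)
    (h1 : cond1 W ρ) (h2 : cond2 W ρ) (h3 : cond3 W ρ) (h4 : cond4 ρ)
    (σb : H →ₗ[k] H →ₗ[k] A) (hbal : HRBalanced W (fun h g => σb h g))
    (σc : H →ₗ[k] H →ₗ[k] A) (hbalc : HLBalanced W (fun h g => σc h g))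
    (hc14 : cond14 W ρ (fun h g => σc h g)) (hc15 : cond15 W ρ (fun h g => σc h g))
    (hc16 : cond16 W ρ (fun h g => σb h g) (fun h g => σc h g)) :
    cond13 W ρ (sigmaTilde W ρ σc) ∧ cond14 W ρ (sigmaTilde W ρ σc) ∧
      cond15 W ρ (sigmaTilde W ρ σc) ∧
      cond16 W ρ (fun h g => σb h g) (sigmaTilde W ρ σc) := by
  have E : ∀ a b, sigmaTilde W ρ σc a b = σc a b :=
    sigmaTilde_eq W hW ρ h1 σb σc hc15 hc16
  refine ⟨?_, ?_, ?_, ?_⟩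
  · intro h g n x y m u v hh hg
    simp only [E]
    rw [← sigmaTilde_rep W ρ σc hh hg]
    exact (E h g).symm
  · intro h g l hl
    simp only [E]
    exact hc14 h g l hl
  · intro h g l hl n x y hh
    simp only [E]
    exact hc15 h g l hl n x y hh
  · intro h g n x y m u v hh hg
    simp only [E]
    exact hc16 h g n x y m u v hh hg
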